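/- For all real numbers h1, h2, P, p with 0 < h1 ≤ h2, P > 0 and p ∈ [0, 1], the heterogeneous first-order term C*_s := p·(1/2)·ln(1 + h2·P) + (1 − p)·(1/2)·ln(1 + h1·P) + ((1 − p)/2)·( h2/(1 + h2·P) − h1/(1 + h1·P) )·P satisfies C*_s ≤ (1/2)·ln(1 + h2·P). -/

import Mathlib

lemma key_mono (a b : ℝ) (ha : 0 < a) (hab : a ≤ b) :
    Real.log (1 + a) + (b / (1 + b) - a / (1 + a)) ≤ Real.log (1 + b) := by
  have h1a : (0:ℝ) < 1 + a := by linarith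
  have h1b : (0:ℝ) < 1 + b := by linarith
  have h := Real.log_le_sub_one_of_pos (div_pos h1a h1b)
  rw [Real.log_div (ne_of_gt h1a) (ne_of_gt h1b)] at h
  have heq : (1 + a) / (1 + b) - 1 = (a - b) / (1 + b) := by field_simp; ring
  rw [heq] at h
  have h2 : b / (1 + b) - a / (1 + a) ≤ (b - a) / (1 + b) := by
    rw [div_sub_div _ _ (ne_of_gt h1b) (ne_of_gt h1a), div_le_div_iff₀ (by positivity) h1b]
    nlinarith [mul_nonneg (mul_nonneg (sub_nonneg.2 hab) h1b.le) ha.le]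
  have h3 : (a - b) / (1 + b) = -((b - a) / (1 + b)) := by ring
  rw [h3] at h
  linarith

/-- The heterogeneous-blocklength Sato-type sum-rate first-order term `C*_s`
is at most the homogeneous-blocklength first-order term `(1/2)·ln(1 + h2·P)`. -/
theorem hetero_first_order_le_homo (h1 h2 P p : ℝ) (hh1 : 0 < h1) (h12 : h1 ≤ h2)
    (hP : 0 < P) (hp0 : 0 ≤ p) (hp1 : p ≤ 1) :
    p * (1 / 2 * Real.log (1 + h2 * P)) + (1 - p) * (1 / 2 * Real.log (1 + h1 * P)) +
        (1 - p) / 2 * (h2 / (1 + h2 * P) - h1 / (1 + h1 * P)) * P ≤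
      1 / 2 * Real.log (1 + h2 * P) := by
  have ha : 0 < h1 * P := mul_pos hh1 hP
  have hab : h1 * P ≤ h2 * P := mul_le_mul_of_nonneg_right h12 hP.le
  have key := key_mono (h1 * P) (h2 * P) ha hab
  have h1a : (0:ℝ) < 1 + h1 * P := by linarith
  have h1b : (0:ℝ) < 1 + h2 * P := by linarith
  have heq : (h2 / (1 + h2 * P) - h1 / (1 + h1 * P)) * P
      = h2 * P / (1 + h2 * P) - h1 * P / (1 + h1 * P) := by
    field_simp
  have hs : 0 ≤ 1 - p := by linarith
  nlinarith [mul_le_mul_of_nonneg_left key hs, heq]
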